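/- Let (W_t)_{t ≥ 0} be a standard one-dimensional Brownian motion. Then √N · E[ sup_{0 ≤ t ≤ 1} | W_t − W_{⌊Nt⌋/N} | ] → ∞ as N → ∞. In particular, there is no constant K such that E[ sup_{0 ≤ t ≤ 1} | W_t − W_{⌊Nt⌋/N} | ] ≤ K · N^{-1/2} for all N ≥ 1; i.e. the piecewise constant (Euler) interpolation of Brownian motion does not converge strongly at rate N^{-1/2} in the uniform norm. -/

import Mathlib

open MeasureTheory ProbabilityTheory Filter Set

/-- `W` is a standard one-dimensional Brownian motion on the probability
space `(Ω, P)`: `W_0 = 0`, continuous sample paths on `[0, ∞)`, increments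
`W_t − W_s ~ N(0, t − s)` for `0 ≤ s ≤ t`, and independent increments. -/
def IsStdBM {Ω : Type*} [MeasurableSpace Ω] (P : Measure Ω)
    (W : ℝ → Ω → ℝ) : Prop :=
  (∀ t, Measurable (W t)) ∧
  (∀ ω, W 0 ω = 0) ∧
  (∀ ω, ContinuousOn (fun t => W t ω) (Set.Ici 0)) ∧
  (∀ s t : ℝ, 0 ≤ s → s ≤ t →
    Measure.map (fun ω => W t ω - W s ω) P
      = gaussianReal 0 (Real.toNNReal (t - s))) ∧
  (∀ (n : ℕ) (ts : Fin (n + 1) → ℝ), (∀ i, 0 ≤ ts i) → Monotone ts →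
    iIndepFun
      (fun i : Fin n => fun ω => W (ts i.succ) ω - W (ts i.castSucc) ω) P)

/-- `E[ sup_{0 ≤ t ≤ 1} |W_t − W_{⌊Nt⌋/N}| ]`, as a Lebesgue integral in
`[0, ∞]`. -/
noncomputable def eulerErr {Ω : Type*} [MeasurableSpace Ω] (P : Measure Ω)
    (W : ℝ → Ω → ℝ) (N : ℕ) : ENNReal :=
  ∫⁻ ω, ENNReal.ofReal
    (sSup ((fun t => |W t ω - W (↑⌊(N : ℝ) * t⌋ / (N : ℝ)) ω|) ''
      Set.Icc (0:ℝ) 1)) ∂P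

open Real in
private lemma gauss_tail (N : ℕ) (hN : 1 ≤ N) (a : ℝ) (ha : 0 ≤ a) :
    ENNReal.ofReal ((Real.sqrt (2 * Real.pi))⁻¹ * Real.exp (-(a+1)^2/2))
      ≤ gaussianReal 0 (Real.toNNReal (1/N)) (Set.Ici (a / Real.sqrt N)) := by
  have hNpos : (0:ℝ) < N := by exact_mod_cast hN
  have hsN : (0:ℝ) < Real.sqrt N := Real.sqrt_pos.2 hNpos
  set σ : ℝ := (Real.sqrt N)⁻¹ with hσ
  set c : ℝ := a / Real.sqrt N with hc
  have hσpos : 0 < σ := inv_pos.2 hsN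
  have hcnn : 0 ≤ c := div_nonneg ha hsN.le
  have hv : Real.toNNReal (1/N) ≠ 0 := by
    simp only [ne_eq, ← NNReal.coe_eq_zero]
    rw [Real.coe_toNNReal _ (by positivity)]
    positivity
  have vcoe : ((Real.toNNReal (1/(N:ℝ))) : ℝ) = 1/N := Real.coe_toNNReal _ (by positivity)
  rw [gaussianReal_apply 0 hv]
  have key : (Real.sqrt (2 * Real.pi))⁻¹ * Real.exp (-(a+1)^2/2)
      = gaussianPDFReal 0 (Real.toNNReal (1/N)) (c + σ) * σ := by
    rw [gaussianPDFReal]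
    rw [vcoe]
    have h1 : c + σ - 0 = (a+1) / Real.sqrt N := by
      rw [hc, hσ]; field_simp; ring
    rw [h1]
    have h2 : ((a+1)/Real.sqrt N)^2 = (a+1)^2 / N := by
      rw [div_pow, Real.sq_sqrt hNpos.le]
    rw [h2]
    have h3 : -((a+1)^2 / N) / (2 * (1/N)) = -(a+1)^2/2 := by
      field_simp
    rw [h3]
    have h4 : Real.sqrt (2 * Real.pi * (1/N)) = Real.sqrt (2*Real.pi) * σ := by
      rw [Real.sqrt_mul (by positivity), hσ, one_div, Real.sqrt_inv]
    rw [h4, mul_inv]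
    field_simp
  calc ENNReal.ofReal ((Real.sqrt (2 * Real.pi))⁻¹ * Real.exp (-(a+1)^2/2))
      = ENNReal.ofReal (gaussianPDFReal 0 (Real.toNNReal (1/N)) (c + σ)) * ENNReal.ofReal σ := by
        rw [key, ENNReal.ofReal_mul (gaussianPDFReal_nonneg _ _ _)]
    _ = ∫⁻ _ in Set.Icc c (c+σ), ENNReal.ofReal (gaussianPDFReal 0 (Real.toNNReal (1/N)) (c + σ)) := by
        rw [setLIntegral_const, Real.volume_Icc]
        congr 1
        ring_nf
    _ ≤ ∫⁻ x in Set.Icc c (c+σ), gaussianPDF 0 (Real.toNNReal (1/N)) x := by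
        refine setLIntegral_mono' measurableSet_Icc fun x hx => ?_
        rw [gaussianPDF_def]
        apply ENNReal.ofReal_le_ofReal
        rw [gaussianPDFReal, gaussianPDFReal, vcoe]
        refine mul_le_mul_of_nonneg_left ?_ (by positivity)
        apply Real.exp_le_exp.2
        have hx2 : x^2 ≤ (c+σ)^2 := by
          have h0x : 0 ≤ x := hcnn.trans hx.1
          nlinarith [hx.2]
        have hD : (0:ℝ) < 2 * (1/N) := by positivity
        rw [div_le_div_iff_of_pos_right hD]
        simp only [sub_zero]
        linarith
    _ ≤ ∫⁻ x in Set.Ici c, gaussianPDF 0 (Real.toNNReal (1/N)) x :=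
        lintegral_mono_set (Set.Icc_subset_Ici_self)

open Real in
private lemma sSup_ge_incr {Ω : Type*} (W : ℝ → Ω → ℝ) (ω : Ω)
    (hcont : ContinuousOn (fun t => W t ω) (Set.Ici 0)) (N k : ℕ) (hk : k < N) :
    |W ((k+1:ℕ)/N) ω - W ((k:ℕ)/N) ω| ≤
      sSup ((fun t => |W t ω - W (↑⌊(N : ℝ) * t⌋ / (N : ℝ)) ω|) '' Set.Icc (0:ℝ) 1) := by
  have hNpos : (0:ℝ) < N := by exact_mod_cast lt_of_le_of_lt (Nat.zero_le k) hk
  set S := ((fun t => |W t ω - W (↑⌊(N : ℝ) * t⌋ / (N : ℝ)) ω|) '' Set.Icc (0:ℝ) 1) with hS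
  -- boundedness
  obtain ⟨C, hC⟩ : ∃ C, ∀ x ∈ Set.Icc (0:ℝ) 1, ‖W x ω‖ ≤ C :=
    isCompact_Icc.exists_bound_of_continuousOn (hcont.mono (fun x hx => hx.1))
  have hbdd : BddAbove S := by
    refine ⟨C + C, fun y hy => ?_⟩
    obtain ⟨t, ht, rfl⟩ := hy
    have hfl : (↑⌊(N : ℝ) * t⌋ / (N : ℝ)) ∈ Set.Icc (0:ℝ) 1 := by
      constructor
      · apply div_nonneg _ hNpos.le
        exact_mod_cast Int.floor_nonneg.2 (mul_nonneg hNpos.le ht.1)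
      · rw [div_le_one hNpos]
        calc ((⌊(N:ℝ)*t⌋ : ℝ)) ≤ (N:ℝ)*t := Int.floor_le _
          _ ≤ N * 1 := by nlinarith [ht.1, ht.2]
          _ = N := mul_one _
    calc |W t ω - W (↑⌊(N : ℝ) * t⌋ / (N : ℝ)) ω|
        ≤ |W t ω| + |W (↑⌊(N : ℝ) * t⌋ / (N : ℝ)) ω| := abs_sub _ _
      _ ≤ C + C := add_le_add (hC t ht) (hC _ hfl)
  -- membership of values on the block
  set b : ℝ := (k+1:ℕ)/N with hb
  set a : ℝ := (k:ℕ)/N with ha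
  have hab : a < b := by
    rw [ha, hb]
    gcongr
    exact_mod_cast Nat.lt_succ_self k
  have hmemb : ∀ t ∈ Set.Ico a b, |W t ω - W a ω| ∈ S := by
    intro t ht
    have h0t : 0 ≤ t := le_trans (by positivity) ht.1
    have htIcc : t ∈ Set.Icc (0:ℝ) 1 := by
      refine ⟨h0t, ?_⟩
      have : t < b := ht.2
      have hble : b ≤ 1 := by
        rw [hb, div_le_one hNpos]
        exact_mod_cast Nat.succ_le_of_lt hk
      linarith
    have hfl : (⌊(N:ℝ)*t⌋ : ℝ) = (k:ℕ) := by
      have h1 : (k:ℝ) ≤ t * N := (div_le_iff₀ hNpos).1 ht.1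
      have h2 : t * N < ((k+1:ℕ):ℝ) := (lt_div_iff₀ hNpos).1 ht.2
      have : ⌊(N:ℝ)*t⌋ = (k:ℤ) := by
        rw [Int.floor_eq_iff]
        constructor
        · push_cast
          linarith [mul_comm t (N:ℝ)]
        · push_cast
          push_cast at h2
          linarith [mul_comm t (N:ℝ)]
      exact_mod_cast congrArg (Int.cast : ℤ → ℝ) this
    refine ⟨t, htIcc, ?_⟩
    simp only [hfl]
    rfl
  have hcl : b ∈ closure (Set.Ico a b) := by
    rw [closure_Ico hab.ne]
    exact ⟨hab.le, le_refl _⟩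
  haveI : (nhdsWithin b (Set.Ico a b)).NeBot := mem_closure_iff_nhdsWithin_neBot.1 hcl
  have hct : ContinuousWithinAt (fun t => |W t ω - W a ω|) (Set.Ico a b) b := by
    have hb0 : (0:ℝ) ≤ b := by positivity
    have : ContinuousWithinAt (fun t => W t ω) (Set.Ico a b) b :=
      (hcont b hb0).mono (fun x hx => le_trans (by positivity) hx.1)
    exact (this.sub continuousWithinAt_const).abs
  have := le_of_tendsto hct
    (Filter.eventually_of_mem self_mem_nhdsWithin (fun t ht => le_csSup hbdd (hmemb t ht)))
  exact this

open Real in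
open scoped ENNReal NNReal in
private lemma key {Ω : Type*} [MeasurableSpace Ω] (P : Measure Ω) [IsProbabilityMeasure P]
    (W : ℝ → Ω → ℝ) (hW : IsStdBM P W) (N : ℕ) (hN : 1 ≤ N) (a : ℝ) (ha : 0 ≤ a) :
    ENNReal.ofReal a *
      (1 - ENNReal.ofReal (1 - (Real.sqrt (2*Real.pi))⁻¹ * Real.exp (-(a+1)^2/2)) ^ N)
      ≤ ENNReal.ofReal (Real.sqrt N) * eulerErr P W N := by
  obtain ⟨hmeas, hzero, hcont, hlaw, hindep⟩ := hW
  have hNpos : (0:ℝ) < N := by exact_mod_cast hN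
  have hsN : (0:ℝ) < Real.sqrt N := Real.sqrt_pos.2 hNpos
  set p : ℝ := (Real.sqrt (2*Real.pi))⁻¹ * Real.exp (-(a+1)^2/2) with hp
  have hp0 : 0 ≤ p := by positivity
  set c : ℝ := a / Real.sqrt N with hc
  have hc0 : 0 ≤ c := div_nonneg ha hsN.le
  set v : NNReal := Real.toNNReal (1/(N:ℝ)) with hv
  set Δ : Fin N → Ω → ℝ := fun k ω => W ((((k:ℕ):ℝ)+1)/N) ω - W (((k:ℕ):ℝ)/N) ω with hΔ
  have hΔmeas : ∀ k, Measurable (Δ k) := fun k => (hmeas _).sub (hmeas _)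
  set s : Set ℝ := {x | |x| < c} with hs_def
  have hs : MeasurableSet s := measurableSet_lt (measurable_id.abs) measurable_const
  have hlawk : ∀ k : Fin N, Measure.map (Δ k) P = gaussianReal 0 v := by
    intro k
    have h1 : (0:ℝ) ≤ ((k:ℕ):ℝ)/N := by positivity
    have h2 : ((k:ℕ):ℝ)/N ≤ (((k:ℕ):ℝ)+1)/N := by
      exact (div_le_div_iff_of_pos_right hNpos).mpr (by linarith)
    have := hlaw _ _ h1 h2
    rw [this]
    congr 1
    rw [hv]
    congr 1
    field_simp
    ring
  have hindepΔ : iIndepFun Δ P := by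
    have hmono : Monotone (fun i : Fin (N+1) => ((i:ℕ):ℝ)/N) := by
      intro i j hij
      have hij' : ((i:ℕ):ℝ) ≤ ((j:ℕ):ℝ) := by exact_mod_cast hij
      exact (div_le_div_iff_of_pos_right hNpos).mpr hij'
    have h5 := hindep N (fun i => ((i:ℕ):ℝ)/N) (fun i => by positivity) hmono
    simpa only [Fin.val_succ, Fin.coe_castSucc, Nat.cast_add, Nat.cast_one] using h5
  -- the "all increments small" event
  set A : Set Ω := ⋂ k : Fin N, Δ k ⁻¹' s with hA_def
  have hA : MeasurableSet A := MeasurableSet.iInter fun k => (hΔmeas k) hs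
  have hq : ∀ k : Fin N, P (Δ k ⁻¹' s) ≤ ENNReal.ofReal (1 - p) := by
    intro k
    rw [← Measure.map_apply (hΔmeas k) hs, hlawk k]
    calc (gaussianReal 0 v) s ≤ (gaussianReal 0 v) (Set.Ici c)ᶜ := by
          apply measure_mono
          intro x hx
          simp only [hs_def, Set.mem_setOf_eq] at hx
          simp only [Set.mem_compl_iff, Set.mem_Ici, not_le]
          exact lt_of_le_of_lt (le_abs_self x) hx
      _ = 1 - (gaussianReal 0 v) (Set.Ici c) := prob_compl_eq_one_sub measurableSet_Ici
      _ ≤ 1 - ENNReal.ofReal p := tsub_le_tsub_left (gauss_tail N hN a ha) 1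
      _ = ENNReal.ofReal (1 - p) := by
          rw [ENNReal.ofReal_sub _ hp0, ENNReal.ofReal_one]
  have hPA : P A ≤ ENNReal.ofReal (1 - p) ^ N := by
    have hprod := hindepΔ.measure_inter_preimage_eq_mul Finset.univ
      (sets := fun _ => s) (fun k _ => hs)
    have hAeq : (⋂ k ∈ Finset.univ, Δ k ⁻¹' s) = A := by
      simp [hA_def]
    rw [hAeq] at hprod
    rw [hprod]
    calc ∏ k : Fin N, P (Δ k ⁻¹' s) ≤ ∏ _k : Fin N, ENNReal.ofReal (1 - p) :=
          Finset.prod_le_prod' fun k _ => hq k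
      _ = ENNReal.ofReal (1 - p) ^ N := by
          rw [Finset.prod_const, Finset.card_univ, Fintype.card_fin]
  have hPE : 1 - ENNReal.ofReal (1 - p) ^ N ≤ P Aᶜ := by
    rw [prob_compl_eq_one_sub hA]
    exact tsub_le_tsub_left hPA 1
  -- lower bound for the integral
  have hint : ENNReal.ofReal c * P Aᶜ ≤ eulerErr P W N := by
    rw [← lintegral_indicator_const hA.compl (ENNReal.ofReal c)]
    apply lintegral_mono
    intro ω
    by_cases hω : ω ∈ Aᶜ
    · rw [Set.indicator_of_mem hω]
      simp only [hA_def, Set.mem_compl_iff, Set.mem_iInter, not_forall] at hω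
      obtain ⟨k, hk⟩ := hω
      simp only [Set.mem_preimage, hs_def, Set.mem_setOf_eq, not_lt] at hk
      apply ENNReal.ofReal_le_ofReal
      refine le_trans hk ?_
      have hss := sSup_ge_incr W ω (hcont ω) N k k.isLt
      push_cast at hss
      exact hss
    · rw [Set.indicator_of_notMem hω]
      exact zero_le
  calc ENNReal.ofReal a * (1 - ENNReal.ofReal (1-p) ^ N)
      ≤ ENNReal.ofReal a * P Aᶜ := mul_le_mul_right hPE _
    _ = ENNReal.ofReal (Real.sqrt N) * (ENNReal.ofReal c * P Aᶜ) := by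
        rw [← mul_assoc, ← ENNReal.ofReal_mul hsN.le]
        congr 2
        rw [hc]
        field_simp
    _ ≤ ENNReal.ofReal (Real.sqrt N) * eulerErr P W N := mul_le_mul_right hint _

open Real in
open scoped ENNReal NNReal in
/-- For a standard Brownian motion `W`,
`√N · E[ sup_{0 ≤ t ≤ 1} |W_t − W_{⌊Nt⌋/N}| ] → ∞` as `N → ∞`; in particular
there is no constant `K` with
`E[ sup_{0 ≤ t ≤ 1} |W_t − W_{⌊Nt⌋/N}| ] ≤ K·N^{-1/2}` for all `N ≥ 1`:
the piecewise constant (Euler) interpolation of Brownian motion does not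
converge strongly at rate `N^{-1/2}` in the uniform norm. -/

theorem euler_interpolation_not_rate_half
    {Ω : Type*} [MeasurableSpace Ω] (P : Measure Ω) [IsProbabilityMeasure P]
    (W : ℝ → Ω → ℝ) (hW : IsStdBM P W) :
    Filter.Tendsto
      (fun N : ℕ => ENNReal.ofReal (Real.sqrt N) * eulerErr P W N)
      Filter.atTop (nhds ⊤) ∧
    ¬ ∃ K : ℝ, ∀ N : ℕ, 1 ≤ N →
      eulerErr P W N ≤ ENNReal.ofReal (K * (N : ℝ) ^ (-(1/2 : ℝ))) := by
  have h2pi : (1:ℝ) ≤ 2 * Real.pi := by nlinarith [Real.pi_gt_three]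
  have hs2pi : (1:ℝ) ≤ Real.sqrt (2 * Real.pi) := by
    rw [show (1:ℝ) = Real.sqrt 1 from (Real.sqrt_one).symm]
    exact Real.sqrt_le_sqrt h2pi
  have htop : Filter.Tendsto
      (fun N : ℕ => ENNReal.ofReal (Real.sqrt N) * eulerErr P W N)
      Filter.atTop (nhds ⊤) := by
    apply ENNReal.tendsto_nhds_top
    intro n
    have hlog : Filter.Tendsto (fun N : ℕ => Real.log N) atTop atTop :=
      Real.tendsto_log_atTop.comp tendsto_natCast_atTop_atTop
    set C : ℝ := max ((4*(n:ℝ)+4)^2) ((4/3)*(1 + Real.log (Real.sqrt (2*Real.pi)))) with hC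
    filter_upwards [hlog.eventually_ge_atTop C, eventually_ge_atTop 1] with N hlogN hN1
    have hNpos : (0:ℝ) < N := by exact_mod_cast hN1
    have hC0 : (0:ℝ) ≤ C := le_max_of_le_left (by positivity)
    have hlog0 : (0:ℝ) ≤ Real.log N := le_trans hC0 hlogN
    set a : ℝ := Real.sqrt (Real.log N) / 2 with ha_def
    have ha : 0 ≤ a := by positivity
    set p : ℝ := (Real.sqrt (2*Real.pi))⁻¹ * Real.exp (-(a+1)^2/2) with hp_def
    have hp0 : 0 < p := by positivity
    have hp1 : p ≤ 1 := by
      rw [hp_def]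
      calc (Real.sqrt (2*Real.pi))⁻¹ * Real.exp (-(a+1)^2/2)
          ≤ 1 * 1 := by
            apply mul_le_mul
            · rw [inv_le_one_iff₀]; right; exact hs2pi
            · rw [Real.exp_le_one_iff]; nlinarith [sq_nonneg (a+1)]
            · positivity
            · norm_num
        _ = 1 := by norm_num
    have ha2 : a^2 = Real.log N / 4 := by
      rw [ha_def, div_pow, Real.sq_sqrt hlog0]; norm_num
    -- N * p ≥ 1
    have hNp : 1 ≤ (N:ℝ) * p := by
      have hCge : (4/3)*(1 + Real.log (Real.sqrt (2*Real.pi))) ≤ Real.log N :=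
        le_trans (le_max_right _ _) hlogN
      have hexp1 : Real.exp (-(Real.log N/4) - 1) ≤ Real.exp (-(a+1)^2/2) := by
        apply Real.exp_le_exp.2
        nlinarith [sq_nonneg (a-1), ha2]
      have hinv : (Real.sqrt (2*Real.pi))⁻¹ = Real.exp (-(Real.log (Real.sqrt (2*Real.pi)))) := by
        rw [Real.exp_neg, Real.exp_log (by positivity)]
      calc (1:ℝ) = Real.exp 0 := (Real.exp_zero).symm
        _ ≤ Real.exp (Real.log N - Real.log (Real.sqrt (2*Real.pi)) - Real.log N/4 - 1) := by
            apply Real.exp_le_exp.2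
            linarith
        _ = Real.exp (Real.log N) * (Real.exp (-(Real.log (Real.sqrt (2*Real.pi)))) *
              Real.exp (-(Real.log N/4) - 1)) := by
            rw [← Real.exp_add, ← Real.exp_add]; ring_nf
        _ ≤ (N:ℝ) * ((Real.sqrt (2*Real.pi))⁻¹ * Real.exp (-(a+1)^2/2)) := by
            rw [Real.exp_log hNpos, hinv]
            apply mul_le_mul_of_nonneg_left _ hNpos.le
            exact mul_le_mul_of_nonneg_left hexp1 (by positivity)
        _ = (N:ℝ) * p := rfl
    -- (1-p)^N ≤ 1/2
    have hpow : (1 - p)^N ≤ 1/2 := by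
      have h1p : 0 ≤ 1 - p := by linarith
      calc (1-p)^N ≤ (Real.exp (-p))^N := by
            apply pow_le_pow_left₀ h1p
            linarith [Real.add_one_le_exp (-p)]
        _ = Real.exp ((N:ℕ) * (-p)) := (Real.exp_nat_mul _ _).symm
        _ ≤ Real.exp (-1) := by
            apply Real.exp_le_exp.2
            nlinarith
        _ ≤ 1/2 := by
            rw [Real.exp_neg]
            have h1 : (Real.exp 1)⁻¹ * Real.exp 1 = 1 := inv_mul_cancel₀ (Real.exp_pos 1).ne'
            have h2 : (2.7182818283:ℝ) < Real.exp 1 := Real.exp_one_gt_d9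
            have h3 : 0 < (Real.exp 1)⁻¹ := inv_pos.2 (Real.exp_pos 1)
            nlinarith
    have hq : ENNReal.ofReal (1 - p) ^ N ≤ ENNReal.ofReal (1/2) := by
      rw [← ENNReal.ofReal_pow (by linarith)]
      exact ENNReal.ofReal_le_ofReal hpow
    have hhalf : ENNReal.ofReal (1/2) ≤ 1 - ENNReal.ofReal (1 - p) ^ N := by
      have : (1:ENNReal) - ENNReal.ofReal (1/2) = ENNReal.ofReal (1/2) := by
        rw [← ENNReal.ofReal_one, ← ENNReal.ofReal_sub _ (by norm_num)]
        norm_num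
      rw [← this]
      exact tsub_le_tsub_left hq 1
    -- a is large
    have halarge : 4*(n:ℝ) + 4 ≤ Real.sqrt (Real.log N) := by
      have : ((4*(n:ℝ)+4)^2) ≤ Real.log N := le_trans (le_max_left _ _) hlogN
      calc 4*(n:ℝ)+4 = Real.sqrt ((4*(n:ℝ)+4)^2) := by
            rw [Real.sqrt_sq (by positivity)]
        _ ≤ Real.sqrt (Real.log N) := Real.sqrt_le_sqrt this
    calc (n : ℝ≥0∞) = ENNReal.ofReal n := (ENNReal.ofReal_natCast n).symm
      _ < ENNReal.ofReal (a * (1/2)) := by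
          rw [ENNReal.ofReal_lt_ofReal_iff (by rw [ha_def]; nlinarith)]
          rw [ha_def]; nlinarith
      _ = ENNReal.ofReal a * ENNReal.ofReal (1/2) := ENNReal.ofReal_mul ha
      _ ≤ ENNReal.ofReal a * (1 - ENNReal.ofReal (1 - p) ^ N) := mul_le_mul_right hhalf _
      _ ≤ ENNReal.ofReal (Real.sqrt N) * eulerErr P W N := key P W hW N hN1 a ha
  refine ⟨htop, ?_⟩
  rintro ⟨K, hK⟩
  have h2 : ∀ᶠ N : ℕ in atTop,
      ENNReal.ofReal K < ENNReal.ofReal (Real.sqrt N) * eulerErr P W N :=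
    htop (Ioi_mem_nhds ENNReal.ofReal_lt_top)
  obtain ⟨N, hNlt, hN1⟩ := (h2.and (eventually_ge_atTop 1)).exists
  have hNpos : (0:ℝ) < N := by exact_mod_cast hN1
  have hsN : (0:ℝ) < Real.sqrt N := Real.sqrt_pos.2 hNpos
  have heq : Real.sqrt N * (K * (N:ℝ) ^ (-(1/2:ℝ))) = K := by
    rw [Real.rpow_neg hNpos.le, ← Real.sqrt_eq_rpow]
    field_simp
  have hub : ENNReal.ofReal (Real.sqrt N) * eulerErr P W N ≤ ENNReal.ofReal K := by
    calc ENNReal.ofReal (Real.sqrt N) * eulerErr P W N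
        ≤ ENNReal.ofReal (Real.sqrt N) * ENNReal.ofReal (K * (N:ℝ) ^ (-(1/2:ℝ))) :=
          mul_le_mul_right (hK N hN1) _
      _ = ENNReal.ofReal (Real.sqrt N * (K * (N:ℝ) ^ (-(1/2:ℝ)))) :=
          (ENNReal.ofReal_mul hsN.le).symm
      _ = ENNReal.ofReal K := by rw [heq]
  exact absurd hNlt (not_lt.2 hub)
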